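/- Let σ0 > 0, ᾱ ∈ (0,1), σ_t = √(ᾱ σ0² + (1 − ᾱ)), c = √ᾱ σ0/σ_t, and let f ∈ (c, 1]. Define D = σ0² ( f − c )² + σ0² (1 − c²) and √P = σ0 (1 − f). Then σ0² (σ0 − √P)² − ( σ0² + (σ0 − √P)² − D )² / 4 = σ0⁴ f² (1 − c²) > 0, and consequently (1/2) log ( σ0² (σ0 − √P)² / ( σ0² (σ0 − √P)² − ( σ0² + (σ0 − √P)² − D )² / 4 ) ) = (1/2) log ( 1 + ᾱ σ0² / (1 − ᾱ) ). (That is, the rate-distortion-perception function of the scalar Gaussian source, evaluated at the distortion–perception pair (D_t^ρ, P_t^ρ) achieved by the score-scaled PF-ODE decoder with product factor f, equals the mutual information (1/2) log(1 + ᾱ_t σ0²/(1 − ᾱ_t)) of the AWGN observation channel.) -/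

import Mathlib

/-- The scalar Gaussian rate-distortion-perception function evaluated at the
distortion–perception pair achieved by the score-scaled PF-ODE decoder with product
factor `f` equals the mutual information `(1/2) log(1 + ᾱ σ0²/(1−ᾱ))` of the AWGN
observation channel. -/
theorem stmt_14 (σ0 ab f : ℝ) (hσ0 : 0 < σ0) (hab : ab ∈ Set.Ioo (0:ℝ) 1)
    (σt : ℝ) (hσt : σt = Real.sqrt (ab * σ0 ^ 2 + (1 - ab)))
    (c : ℝ) (hc : c = Real.sqrt ab * σ0 / σt)
    (hf : f ∈ Set.Ioc c 1)
    (D : ℝ) (hD : D = σ0 ^ 2 * (f - c) ^ 2 + σ0 ^ 2 * (1 - c ^ 2))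
    (sP : ℝ) (hsP : sP = σ0 * (1 - f)) :
    σ0 ^ 2 * (σ0 - sP) ^ 2 - (σ0 ^ 2 + (σ0 - sP) ^ 2 - D) ^ 2 / 4
        = σ0 ^ 4 * f ^ 2 * (1 - c ^ 2) ∧
    0 < σ0 ^ 4 * f ^ 2 * (1 - c ^ 2) ∧
    (1/2) * Real.log (σ0 ^ 2 * (σ0 - sP) ^ 2 /
        (σ0 ^ 2 * (σ0 - sP) ^ 2 - (σ0 ^ 2 + (σ0 - sP) ^ 2 - D) ^ 2 / 4))
      = (1/2) * Real.log (1 + ab * σ0 ^ 2 / (1 - ab)) := by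
  obtain ⟨hab0, hab1⟩ := hab
  have hpos : 0 < ab * σ0 ^ 2 + (1 - ab) := by nlinarith [sq_nonneg σ0]
  have hσtpos : 0 < σt := by rw [hσt]; exact Real.sqrt_pos.mpr hpos
  have hs2 : σt ^ 2 = ab * σ0 ^ 2 + (1 - ab) := by
    rw [hσt, Real.sq_sqrt hpos.le]
  have hc2 : c ^ 2 = ab * σ0 ^ 2 / σt ^ 2 := by
    rw [hc, div_pow, mul_pow, Real.sq_sqrt hab0.le]
  have h1c2 : 1 - c ^ 2 = (1 - ab) / σt ^ 2 := by
    rw [hc2]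
    field_simp
    linarith
  have hcnn : 0 ≤ c := by
    rw [hc]; positivity
  have hfpos : 0 < f := lt_of_le_of_lt hcnn hf.1
  have h1c2pos : 0 < 1 - c ^ 2 := by
    rw [h1c2]; exact div_pos (by linarith) (by positivity)
  have e1 : σ0 ^ 2 * (σ0 - sP) ^ 2 - (σ0 ^ 2 + (σ0 - sP) ^ 2 - D) ^ 2 / 4
      = σ0 ^ 4 * f ^ 2 * (1 - c ^ 2) := by
    subst hD hsP; ring
  have e2 : 0 < σ0 ^ 4 * f ^ 2 * (1 - c ^ 2) := by positivity
  refine ⟨e1, e2, ?_⟩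
  have esq : σ0 ^ 2 * (σ0 - sP) ^ 2 = σ0 ^ 4 * f ^ 2 := by
    subst hsP; ring
  rw [e1, esq]
  have harg : σ0 ^ 4 * f ^ 2 / (σ0 ^ 4 * f ^ 2 * (1 - c ^ 2))
      = 1 + ab * σ0 ^ 2 / (1 - ab) := by
    rw [h1c2]
    have hne1 : (1:ℝ) - ab ≠ 0 := by linarith
    have hne2 : σt ^ 2 ≠ 0 := by positivity
    have hne3 : (σ0:ℝ) ^ 4 * f ^ 2 ≠ 0 := by positivity
    field_simp
    linear_combination hs2
  rw [harg]
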